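/- Let H be a graph of order p, G_i be d_i-regular graphs of order n_i, and G the H-join. Then s(G) ≤ max_i d_i + λ_1(H)·λ_1(P) − min{ d_{i*} − s(G_{i*}), λ_p(M) }, where P is the p×p matrix with zero diagonal and (i,j) entry √(n_i n_j) for i ≠ j, M = A(H)N + D, and i* achieves min_i (d_i − s(G_i)). -/

import Mathlib

open scoped Classical

set_option linter.unusedSectionVars false
set_option linter.unusedVariables false
set_option maxHeartbeats 1000000
open Matrix

/-- Adjacency matrix of a simple graph over the reals. -/
noncomputable def adjMat {W : Type*} [Fintype W] (G : SimpleGraph W) : Matrix W W ℝ :=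
  fun x y => if G.Adj x y then 1 else 0

/-- `μ` is an eigenvalue of the adjacency matrix of `G`. -/
def IsEigen {W : Type*} [Fintype W] (G : SimpleGraph W) (μ : ℝ) : Prop :=
  ∃ v : W → ℝ, v ≠ 0 ∧ (adjMat G).mulVec v = μ • v

/-- Largest adjacency eigenvalue. -/
noncomputable def lamMax {W : Type*} [Fintype W] (G : SimpleGraph W) : ℝ :=
  sSup {μ | IsEigen G μ}

/-- Smallest adjacency eigenvalue. -/
noncomputable def lamMin {W : Type*} [Fintype W] (G : SimpleGraph W) : ℝ :=
  sInf {μ | IsEigen G μ}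

/-- Spread of a graph: largest minus smallest adjacency eigenvalue. -/
noncomputable def spread {W : Type*} [Fintype W] (G : SimpleGraph W) : ℝ :=
  lamMax G - lamMin G

/-- An eigenvalue is non-main if its eigenspace is orthogonal to the all-ones vector. -/
def IsNonMain {W : Type*} [Fintype W] (G : SimpleGraph W) (μ : ℝ) : Prop :=
  ∀ v : W → ℝ, (adjMat G).mulVec v = μ • v → ∑ i, v i = 0

/-- `S` is a `(k,τ)`-regular set in `G`. -/
def IsKTauRegularSet {W : Type*} [Fintype W] (G : SimpleGraph W) (S : Set W) (k τ : ℕ) : Prop :=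
  (∀ i ∈ S, {j | j ∈ S ∧ G.Adj i j}.ncard = k) ∧
  (∀ i ∉ S, {j | j ∈ S ∧ G.Adj i j}.ncard = τ)

/-- Characteristic vector of a vertex subset. -/
noncomputable def charVec {W : Type*} (S : Set W) : W → ℝ :=
  fun i => if i ∈ S then 1 else 0

/-- `G` is `d`-regular (each row of the adjacency matrix sums to `d`). -/
def IsReg {W : Type*} [Fintype W] (G : SimpleGraph W) (d : ℕ) : Prop :=
  ∀ i, ∑ j, adjMat G i j = (d : ℝ)

/-- Adjacency spectrum of `G` as a multiset (roots of the characteristic polynomial). -/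
noncomputable def specMul {W : Type*} [Fintype W] (G : SimpleGraph W) : Multiset ℝ :=
  (adjMat G).charpoly.roots

/-- The `(H, 𝒮)`-generalized join of the family `G` constrained by vertex subsets `S`. -/
def genJoin {p : ℕ} {V : Fin p → Type*} (H : SimpleGraph (Fin p))
    (G : ∀ i, SimpleGraph (V i)) (S : ∀ i, Set (V i)) : SimpleGraph (Σ i, V i) where
  Adj x y :=
    (∃ (i : Fin p) (a b : V i), x = ⟨i, a⟩ ∧ y = ⟨i, b⟩ ∧ (G i).Adj a b) ∨
    (x.1 ≠ y.1 ∧ H.Adj x.1 y.1 ∧ x.2 ∈ S x.1 ∧ y.2 ∈ S y.1)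
  symm := by
    constructor
    rintro x y (⟨i, a, b, rfl, rfl, hab⟩ | ⟨hne, hH, hx, hy⟩)
    · exact Or.inl ⟨i, b, a, rfl, rfl, hab.symm⟩
    · exact Or.inr ⟨hne.symm, hH.symm, hy, hx⟩
  loopless := by
    constructor
    rintro x (⟨i, a, b, rfl, h2, hab⟩ | ⟨hne, _⟩)
    · obtain ⟨rfl⟩ := heq_iff_eq.mp (Sigma.mk.inj_iff.mp h2).2
      exact (G i).loopless.irrefl a hab
    · exact hne rfl

/-- The join of two vertex-disjoint graphs. -/
def joinG {A B : Type*} (G1 : SimpleGraph A) (G2 : SimpleGraph B) : SimpleGraph (A ⊕ B) where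
  Adj x y :=
    match x, y with
    | .inl a, .inl b => G1.Adj a b
    | .inr a, .inr b => G2.Adj a b
    | .inl _, .inr _ => True
    | .inr _, .inl _ => True
  symm := by
    constructor
    rintro (a | a) (b | b) h
    · exact h.symm
    · trivial
    · trivial
    · exact h.symm
  loopless := by
    constructor
    rintro (a | a) h
    · exact G1.loopless.irrefl a h
    · exact G2.loopless.irrefl a h

/-- `μ` is an eigenvalue of the real matrix `M`. -/
def matEigen {p : ℕ} (M : Matrix (Fin p) (Fin p) ℝ) (μ : ℝ) : Prop :=
  ∃ v : Fin p → ℝ, v ≠ 0 ∧ M.mulVec v = μ • v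

noncomputable def matMax {p : ℕ} (M : Matrix (Fin p) (Fin p) ℝ) : ℝ :=
  sSup {μ | matEigen M μ}

noncomputable def matMin {p : ℕ} (M : Matrix (Fin p) (Fin p) ℝ) : ℝ :=
  sInf {μ | matEigen M μ}

noncomputable def matSpread {p : ℕ} (M : Matrix (Fin p) (Fin p) ℝ) : ℝ :=
  matMax M - matMin M

/-- The matrix `M = A(H) N + D` associated with an `H`-join of regular graphs. -/
noncomputable def Mjoin {p : ℕ} (H : SimpleGraph (Fin p)) (n d : Fin p → ℕ) :
    Matrix (Fin p) (Fin p) ℝ :=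
  adjMat H * Matrix.diagonal (fun i => (n i : ℝ)) + Matrix.diagonal (fun i => (d i : ℝ))

/-- Average degree of a graph. -/
noncomputable def avgDeg {W : Type*} [Fintype W] (G : SimpleGraph W) : ℝ :=
  2 * G.edgeSet.ncard / Fintype.card W

/-- The graph `G(n,k) = K_k ∨ K̄_{n-k}`. -/
def Gnk (n k : ℕ) : SimpleGraph (Fin k ⊕ Fin (n - k)) :=
  joinG (⊤ : SimpleGraph (Fin k)) (⊥ : SimpleGraph (Fin (n - k)))


def eigs {n : Type*} [Fintype n] (M : Matrix n n ℝ) : Set ℝ := {μ | ∃ v, v ≠ 0 ∧ M.mulVec v = μ • v}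

section core
variable {n : Type*} [Fintype n]

lemma dot_self_nonneg (v : n → ℝ) : 0 ≤ v ⬝ᵥ v :=
  Finset.sum_nonneg fun i _ => mul_self_nonneg _

lemma dot_self_pos {v : n → ℝ} (hv : v ≠ 0) : 0 < v ⬝ᵥ v := by
  rcases Function.ne_iff.mp hv with ⟨i, hi⟩
  have : 0 < v i * v i := mul_self_pos.mpr hi
  exact Finset.sum_pos' (fun j _ => mul_self_nonneg _) ⟨i, Finset.mem_univ i, this⟩

lemma eigs_abs_le {M : Matrix n n ℝ} {μ : ℝ} (h : μ ∈ eigs M) :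
    |μ| ≤ ∑ i, ∑ j, |M i j| := by
  obtain ⟨v, hv, hMv⟩ := h
  have hne : (Finset.univ : Finset n).Nonempty := by
    by_contra hemp
    exact hv (funext fun i => absurd (Finset.mem_univ i) (fun hh => hemp ⟨i, hh⟩))
  obtain ⟨k, -, hk⟩ := Finset.exists_max_image Finset.univ (fun i => |v i|) hne
  have hvk : 0 < |v k| := by
    rcases Function.ne_iff.mp hv with ⟨i, hi⟩
    have h1 : 0 < |v i| := abs_pos.mpr hi
    linarith [hk i (Finset.mem_univ i)]
  have h1 : |μ| * |v k| = |(M.mulVec v) k| := by rw [hMv]; simp [abs_mul]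
  have h2 : |(M.mulVec v) k| ≤ (∑ j, |M k j|) * |v k| := by
    rw [Matrix.mulVec, dotProduct]
    calc |∑ j, M k j * v j| ≤ ∑ j, |M k j * v j| := Finset.abs_sum_le_sum_abs _ _
    _ ≤ ∑ j, |M k j| * |v k| := by
        refine Finset.sum_le_sum fun j _ => ?_
        rw [abs_mul]
        exact mul_le_mul_of_nonneg_left (hk j (Finset.mem_univ j)) (abs_nonneg _)
    _ = (∑ j, |M k j|) * |v k| := by rw [Finset.sum_mul]
  have h3 : (∑ j, |M k j|) ≤ ∑ i, ∑ j, |M i j| :=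
    Finset.single_le_sum (f := fun i => ∑ j, |M i j|) (fun i _ => by positivity) (Finset.mem_univ k)
  have h4 := h1.trans_le h2
  have h5 := mul_le_mul_of_nonneg_right h3 (le_of_lt hvk)
  nlinarith

lemma eigs_bddAbove (M : Matrix n n ℝ) : BddAbove (eigs M) :=
  ⟨∑ i, ∑ j, |M i j|, fun _ hμ => (abs_le.mp (eigs_abs_le hμ)).2⟩

lemma eigs_bddBelow (M : Matrix n n ℝ) : BddBelow (eigs M) :=
  ⟨-(∑ i, ∑ j, |M i j|), fun _ hμ => (abs_le.mp (eigs_abs_le hμ)).1⟩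

lemma vecMul_orth {n : Type*} [Fintype n] [DecidableEq n] {A : Matrix n n ℝ} (hO : A * Aᵀ = 1) (v : n → ℝ) :
    (v ᵥ* A) ⬝ᵥ (v ᵥ* A) = v ⬝ᵥ v := by
  have h : v ⬝ᵥ ((A * Aᵀ) *ᵥ v) = (v ᵥ* A) ⬝ᵥ (v ᵥ* A) := by
    rw [← Matrix.mulVec_mulVec, Matrix.dotProduct_mulVec, Matrix.mulVec_transpose]
  rw [← h, hO, Matrix.one_mulVec]

end core

section spec
variable {n : Type*} [Fintype n] [DecidableEq n] {M : Matrix n n ℝ} (hM : M.IsHermitian)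

noncomputable abbrev eigU : Matrix n n ℝ := (Matrix.IsHermitian.eigenvectorUnitary hM : Matrix n n ℝ)

lemma mySpec : M = eigU hM * Matrix.diagonal hM.eigenvalues * (eigU hM)ᵀ := by
  have h := hM.spectral_theorem
  simpa [Matrix.star_eq_conjTranspose, Matrix.conjTranspose_eq_transpose_of_trivial] using h

lemma hU2 : eigU hM * (eigU hM)ᵀ = 1 := by
  have := (Matrix.mem_unitaryGroup_iff).mp (Matrix.IsHermitian.eigenvectorUnitary hM).2
  simpa [Matrix.star_eq_conjTranspose, Matrix.conjTranspose_eq_transpose_of_trivial] using this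

lemma hU1 : (eigU hM)ᵀ * eigU hM = 1 := by
  have := (Matrix.mem_unitaryGroup_iff').mp (Matrix.IsHermitian.eigenvectorUnitary hM).2
  simpa [Matrix.star_eq_conjTranspose, Matrix.conjTranspose_eq_transpose_of_trivial] using this

include hM in
lemma hMT : Mᵀ = M := by
  have := hM
  rw [Matrix.IsHermitian, Matrix.conjTranspose_eq_transpose_of_trivial] at this
  exact this

lemma normsq_w (v : n → ℝ) :
    (v ᵥ* eigU hM) ⬝ᵥ (v ᵥ* eigU hM) = v ⬝ᵥ v := vecMul_orth (hU2 hM) v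

lemma quadform_eq (v : n → ℝ) :
    v ⬝ᵥ M *ᵥ v = ∑ j, hM.eigenvalues j * ((v ᵥ* eigU hM) j)^2 := by
  have e1 : v ⬝ᵥ M *ᵥ v
      = (((v ᵥ* eigU hM) ᵥ* Matrix.diagonal hM.eigenvalues) ᵥ* (eigU hM)ᵀ) ⬝ᵥ v := by
    conv_lhs => rw [mySpec hM]
    rw [Matrix.dotProduct_mulVec, Matrix.vecMul_vecMul, Matrix.vecMul_vecMul, Matrix.mul_assoc]
  have e2 : (((v ᵥ* eigU hM) ᵥ* Matrix.diagonal hM.eigenvalues) ᵥ* (eigU hM)ᵀ) ⬝ᵥ v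
      = ((v ᵥ* eigU hM) ᵥ* Matrix.diagonal hM.eigenvalues) ⬝ᵥ ((eigU hM)ᵀ *ᵥ v) := by
    rw [Matrix.dotProduct_mulVec]
  rw [e1, e2, Matrix.mulVec_transpose, dotProduct]
  refine Finset.sum_congr rfl fun j _ => ?_
  simp only [Matrix.vecMul_diagonal]
  ring

lemma eig_mem (j : n) : hM.eigenvalues j ∈ eigs M := by
  refine ⟨fun i => eigU hM i j, ?_, ?_⟩
  · intro h0
    have h := congrFun (congrFun (hU1 hM) j) j
    simp only [Matrix.mul_apply, Matrix.transpose_apply, Matrix.one_apply_eq] at h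
    have h0' : ∀ i, eigU hM i j = 0 := fun i => congrFun h0 i
    simp only [Matrix.IsHermitian.eigenvectorUnitary_apply] at h0' ⊢
    simp [h0'] at h
  · have hv : (fun i => eigU hM i j) = eigU hM *ᵥ Pi.single j 1 := by
      funext i; simp [Matrix.mulVec_single]
    have hMU : M * eigU hM = eigU hM * Matrix.diagonal hM.eigenvalues := by
      calc M * eigU hM
          = eigU hM * Matrix.diagonal hM.eigenvalues * (eigU hM)ᵀ * eigU hM := by
            rw [← mySpec hM]
        _ = eigU hM * Matrix.diagonal hM.eigenvalues * ((eigU hM)ᵀ * eigU hM) := by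
            rw [Matrix.mul_assoc (eigU hM * Matrix.diagonal hM.eigenvalues) ((eigU hM)ᵀ)
              (eigU hM)]
        _ = eigU hM * Matrix.diagonal hM.eigenvalues := by rw [hU1 hM, Matrix.mul_one]
    have hsingle : (Pi.single j (hM.eigenvalues j * 1) : n → ℝ)
        = hM.eigenvalues j • (Pi.single j 1 : n → ℝ) := by
      funext i; by_cases h : i = j <;> simp [h, Pi.single_apply]
    have key : M *ᵥ (eigU hM *ᵥ Pi.single j 1)
        = hM.eigenvalues j • (eigU hM *ᵥ Pi.single j 1) := by
      calc M *ᵥ (eigU hM *ᵥ Pi.single j 1)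
          = (M * eigU hM) *ᵥ Pi.single j 1 := by rw [Matrix.mulVec_mulVec]
        _ = (eigU hM * Matrix.diagonal hM.eigenvalues) *ᵥ Pi.single j 1 :=
            congrFun (congrArg Matrix.mulVec hMU) (Pi.single j 1)
        _ = eigU hM *ᵥ (Matrix.diagonal hM.eigenvalues *ᵥ Pi.single j 1) :=
            (Matrix.mulVec_mulVec _ _ _).symm
        _ = eigU hM *ᵥ (Pi.single j (hM.eigenvalues j * 1)) := by
            rw [Matrix.diagonal_mulVec_single]
        _ = eigU hM *ᵥ (hM.eigenvalues j • (Pi.single j 1 : n → ℝ)) := by rw [hsingle]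
        _ = hM.eigenvalues j • (eigU hM *ᵥ Pi.single j 1) := Matrix.mulVec_smul _ _ _
    rw [hv]
    exact key

include hM in
lemma quadform_le_sSup (v : n → ℝ) :
    v ⬝ᵥ M *ᵥ v ≤ sSup (eigs M) * (v ⬝ᵥ v) := by
  rw [quadform_eq hM v, ← normsq_w hM v, dotProduct, Finset.mul_sum]
  refine Finset.sum_le_sum fun j _ => ?_
  have h1 : hM.eigenvalues j ≤ sSup (eigs M) := le_csSup (eigs_bddAbove M) (eig_mem hM j)
  nlinarith [sq_nonneg ((v ᵥ* eigU hM) j)]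

include hM in
lemma sInf_le_quadform (v : n → ℝ) :
    sInf (eigs M) * (v ⬝ᵥ v) ≤ v ⬝ᵥ M *ᵥ v := by
  rw [quadform_eq hM v, ← normsq_w hM v, dotProduct, Finset.mul_sum]
  refine Finset.sum_le_sum fun j _ => ?_
  have h1 : sInf (eigs M) ≤ hM.eigenvalues j := csInf_le (eigs_bddBelow M) (eig_mem hM j)
  nlinarith [sq_nonneg ((v ᵥ* eigU hM) j)]

include hM in
lemma eigs_nonempty [Nonempty n] : (eigs M).Nonempty :=
  ⟨_, eig_mem hM (Classical.arbitrary n)⟩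

include hM in
lemma neg_eig_le (h0 : ∀ i j, 0 ≤ M i j) {μ : ℝ} (hμ : μ ∈ eigs M) :
    -μ ≤ sSup (eigs M) := by
  obtain ⟨v, hv, hMv⟩ := hμ
  have hq : v ⬝ᵥ M *ᵥ v = μ * (v ⬝ᵥ v) := by
    rw [hMv]
    simp only [dotProduct, Pi.smul_apply, smul_eq_mul, Finset.mul_sum]
    exact Finset.sum_congr rfl fun i _ => by ring
  set a : n → ℝ := fun i => |v i| with ha
  have haa : a ⬝ᵥ a = v ⬝ᵥ v := Finset.sum_congr rfl fun i _ => by simp [ha, abs_mul_abs_self]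
  have habs : |v ⬝ᵥ M *ᵥ v| ≤ a ⬝ᵥ M *ᵥ a := by
    calc |v ⬝ᵥ M *ᵥ v| ≤ ∑ i, |v i * (M *ᵥ v) i| := Finset.abs_sum_le_sum_abs _ _
    _ ≤ a ⬝ᵥ M *ᵥ a := by
        refine Finset.sum_le_sum fun i _ => ?_
        rw [abs_mul]
        refine mul_le_mul_of_nonneg_left ?_ (abs_nonneg _)
        calc |(M *ᵥ v) i| ≤ ∑ j, |M i j * v j| := Finset.abs_sum_le_sum_abs _ _
        _ = (M *ᵥ a) i := Finset.sum_congr rfl fun j _ => by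
            rw [abs_mul, abs_of_nonneg (h0 i j)]
  have h2 : a ⬝ᵥ M *ᵥ a ≤ sSup (eigs M) * (v ⬝ᵥ v) := by
    rw [← haa]; exact quadform_le_sSup hM a
  have h3 : 0 < v ⬝ᵥ v := dot_self_pos hv
  have h4 : -(μ * (v ⬝ᵥ v)) ≤ sSup (eigs M) * (v ⬝ᵥ v) := by
    calc -(μ * (v ⬝ᵥ v)) = -(v ⬝ᵥ M *ᵥ v) := by rw [hq]
    _ ≤ |v ⬝ᵥ M *ᵥ v| := neg_le_abs _
    _ ≤ a ⬝ᵥ M *ᵥ a := habs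
    _ ≤ _ := h2
  nlinarith

include hM in
lemma sSup_eigs_nonneg [Nonempty n] (h0 : ∀ i j, 0 ≤ M i j) : 0 ≤ sSup (eigs M) := by
  have hmem := eig_mem hM (Classical.arbitrary n)
  have h1 := le_csSup (eigs_bddAbove M) hmem
  have h2 := neg_eig_le hM h0 hmem
  linarith

include hM in
lemma mulVec_sq_le (h0 : ∀ i j, 0 ≤ M i j) (v : n → ℝ) :
    (M *ᵥ v) ⬝ᵥ (M *ᵥ v) ≤ sSup (eigs M)^2 * (v ⬝ᵥ v) := by
  have hMv : ((v ᵥ* eigU hM) ᵥ* Matrix.diagonal hM.eigenvalues) ᵥ* (eigU hM)ᵀ = M *ᵥ v := by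
    rw [Matrix.vecMul_vecMul, Matrix.vecMul_vecMul, ← Matrix.mul_assoc, ← mySpec hM,
      ← Matrix.mulVec_transpose, hMT hM]
  have horth : (eigU hM)ᵀ * ((eigU hM)ᵀ)ᵀ = 1 := by
    rw [Matrix.transpose_transpose]; exact hU1 hM
  rw [← hMv, vecMul_orth horth, ← normsq_w hM v, dotProduct, dotProduct, Finset.mul_sum]
  refine Finset.sum_le_sum fun j _ => ?_
  simp only [Matrix.vecMul_diagonal]
  have h1 : hM.eigenvalues j ≤ sSup (eigs M) := le_csSup (eigs_bddAbove M) (eig_mem hM j)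
  have h2 : -(hM.eigenvalues j) ≤ sSup (eigs M) := neg_eig_le hM h0 (eig_mem hM j)
  have hsq : hM.eigenvalues j ^ 2 ≤ sSup (eigs M) ^ 2 := sq_le_sq' (by linarith) h1
  calc (v ᵥ* eigU hM) j * hM.eigenvalues j * ((v ᵥ* eigU hM) j * hM.eigenvalues j)
      = hM.eigenvalues j ^ 2 * ((v ᵥ* eigU hM) j * (v ᵥ* eigU hM) j) := by ring
    _ ≤ sSup (eigs M) ^ 2 * ((v ᵥ* eigU hM) j * (v ᵥ* eigU hM) j) :=
        mul_le_mul_of_nonneg_right hsq (mul_self_nonneg _)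

end spec

section hadamard
variable {n : Type*} [Fintype n] [DecidableEq n]

lemma hadamard_bound [Nonempty n] {A P : Matrix n n ℝ}
    (hA : A.IsHermitian) (hP : P.IsHermitian)
    (hA0 : ∀ i j, 0 ≤ A i j) (hP0 : ∀ i j, 0 ≤ P i j) (t : n → ℝ) :
    ∑ i, ∑ j, A i j * P i j * t i * t j
      ≤ sSup (eigs A) * sSup (eigs P) * ∑ i, (t i)^2 := by
  set α := sSup (eigs A) with hαdef
  set β := sSup (eigs P) with hβdef
  have hα : 0 ≤ α := sSup_eigs_nonneg hA hA0
  have hβ : 0 ≤ β := sSup_eigs_nonneg hP hP0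
  set u : n → ℝ := fun i => |t i| with hu
  have hu0 : ∀ i, 0 ≤ u i := fun i => abs_nonneg _
  have husq : ∑ i, (u i)^2 = ∑ i, (t i)^2 :=
    Finset.sum_congr rfl fun i _ => by simp [hu, sq_abs]
  set X := ∑ i, ∑ j, A i j * P i j * u i * u j with hX
  have step1 : ∑ i, ∑ j, A i j * P i j * t i * t j ≤ X := by
    refine Finset.sum_le_sum fun i _ => Finset.sum_le_sum fun j _ => ?_
    have h1 : t i * t j ≤ u i * u j := by
      rw [hu]; simp only [← abs_mul]; exact le_abs_self _
    have h2 : 0 ≤ A i j * P i j := mul_nonneg (hA0 i j) (hP0 i j)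
    calc A i j * P i j * t i * t j = (A i j * P i j) * (t i * t j) := by ring
      _ ≤ (A i j * P i j) * (u i * u j) := mul_le_mul_of_nonneg_left h1 h2
      _ = A i j * P i j * u i * u j := by ring
  have hX0 : 0 ≤ X := by
    refine Finset.sum_nonneg fun i _ => Finset.sum_nonneg fun j _ => ?_
    have := mul_nonneg (mul_nonneg (mul_nonneg (hA0 i j) (hP0 i j)) (hu0 i)) (hu0 j)
    exact this
  set R : Matrix n n ℝ := Matrix.of fun i j => ∑ k, A i k * u k * P k j with hR
  have hPsymm : ∀ i j, P i j = P j i := fun i j => by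
    conv_lhs => rw [← hP]
    simp [Matrix.conjTranspose_apply]
  have step2 : X = ∑ i, u i * R i i := by
    refine Finset.sum_congr rfl fun i _ => ?_
    rw [hR, Matrix.of_apply, Finset.mul_sum]
    refine Finset.sum_congr rfl fun k _ => ?_
    rw [hPsymm i k]; ring
  have cs : X^2 ≤ (∑ i, (u i)^2) * (∑ i, (R i i)^2) := by
    rw [step2]
    exact Finset.sum_mul_sq_le_sq_mul_sq Finset.univ u (fun i => R i i)
  have diag_le : ∑ i, (R i i)^2 ≤ ∑ j, ∑ i, (R i j)^2 := by
    rw [Finset.sum_comm]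
    refine Finset.sum_le_sum fun i _ => ?_
    exact Finset.single_le_sum (f := fun j => (R i j)^2) (fun j _ => sq_nonneg _)
      (Finset.mem_univ i)
  have col_bound : ∀ j, ∑ i, (R i j)^2 ≤ α^2 * ∑ k, (u k * P k j)^2 := by
    intro j
    set q : n → ℝ := fun k => u k * P k j with hq
    have hcol : ∀ i, R i j = (A *ᵥ q) i := by
      intro i
      rw [hR, Matrix.of_apply, Matrix.mulVec, dotProduct]
      exact Finset.sum_congr rfl fun k _ => by rw [hq]; ring
    have hmv := mulVec_sq_le hA hA0 q
    rw [dotProduct, dotProduct] at hmv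
    calc ∑ i, (R i j)^2 = ∑ i, (A *ᵥ q) i * (A *ᵥ q) i := by
          refine Finset.sum_congr rfl fun i _ => ?_; rw [hcol i, sq]
      _ ≤ α^2 * ∑ k, q k * q k := hmv
      _ = α^2 * ∑ k, (u k * P k j)^2 := by
          congr 1; exact Finset.sum_congr rfl fun k _ => by rw [hq, sq]
  have row_bound : ∀ k, ∑ j, (P k j)^2 ≤ β^2 := by
    intro k
    have hmv := mulVec_sq_le hP hP0 ((Pi.single k 1 : n → ℝ))
    have hcol : ∀ j, (P *ᵥ (Pi.single k 1 : n → ℝ)) j = P j k := by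
      intro j; simp [Matrix.mulVec_single]
    rw [dotProduct, dotProduct] at hmv
    have hone : ∑ i, (Pi.single k 1 : n → ℝ) i * (Pi.single k 1 : n → ℝ) i = 1 := by
      rw [Finset.sum_eq_single k (fun b _ hb => by simp [Pi.single_apply, hb])
        (fun h => absurd (Finset.mem_univ k) h)]
      simp
    calc ∑ j, (P k j)^2 = ∑ j, (P *ᵥ (Pi.single k 1 : n → ℝ)) j * (P *ᵥ (Pi.single k 1 : n → ℝ)) j := by
          refine Finset.sum_congr rfl fun j _ => ?_
          rw [hcol j, hPsymm k j, sq]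
      _ ≤ β^2 * ∑ i, (Pi.single k 1 : n → ℝ) i * (Pi.single k 1 : n → ℝ) i := hmv
      _ = β^2 := by rw [hone, mul_one]
  have frob : ∑ j, ∑ i, (R i j)^2 ≤ α^2 * β^2 * ∑ k, (u k)^2 := by
    calc ∑ j, ∑ i, (R i j)^2 ≤ ∑ j, (α^2 * ∑ k, (u k * P k j)^2) :=
          Finset.sum_le_sum fun j _ => col_bound j
      _ = α^2 * ∑ k, (u k)^2 * ∑ j, (P k j)^2 := by
          rw [← Finset.mul_sum]
          congr 1
          rw [Finset.sum_comm]
          refine Finset.sum_congr rfl fun k _ => ?_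
          rw [Finset.mul_sum]
          exact Finset.sum_congr rfl fun j _ => by ring
      _ ≤ α^2 * ∑ k, (u k)^2 * β^2 := by
          refine mul_le_mul_of_nonneg_left ?_ (sq_nonneg α)
          refine Finset.sum_le_sum fun k _ => ?_
          exact mul_le_mul_of_nonneg_left (row_bound k) (sq_nonneg _)
      _ = α^2 * β^2 * ∑ k, (u k)^2 := by rw [← Finset.sum_mul]; ring
  have final_sq : X^2 ≤ (α * β * ∑ i, (u i)^2)^2 := by
    have h1 := cs.trans (mul_le_mul_of_nonneg_left (diag_le.trans frob)
      (Finset.sum_nonneg fun i _ => sq_nonneg (u i)))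
    calc X^2 ≤ (∑ i, (u i)^2) * (α^2 * β^2 * ∑ k, (u k)^2) := h1
      _ = (α * β * ∑ i, (u i)^2)^2 := by ring
  have hrhs0 : 0 ≤ α * β * ∑ i, (u i)^2 := by positivity
  have : X ≤ α * β * ∑ i, (u i)^2 := by nlinarith
  calc ∑ i, ∑ j, A i j * P i j * t i * t j ≤ X := step1
    _ ≤ α * β * ∑ i, (u i)^2 := this
    _ = α * β * ∑ i, (t i)^2 := by rw [husq]

end hadamard

section graphs
variable {Wt : Type*} [Fintype Wt] (Gg : SimpleGraph Wt)

lemma adjMat_nonneg : ∀ i j, 0 ≤ adjMat Gg i j := by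
  intro i j; unfold adjMat; split <;> norm_num

lemma adjMat_symm_entry : ∀ i j, adjMat Gg i j = adjMat Gg j i := by
  intro i j; unfold adjMat; rw [SimpleGraph.adj_comm]

lemma adjMat_herm : (adjMat Gg).IsHermitian := by
  ext i j
  rw [Matrix.conjTranspose_apply, star_trivial]
  exact adjMat_symm_entry Gg j i

lemma eigsIsEigen : {μ | IsEigen Gg μ} = eigs (adjMat Gg) := rfl

lemma adjMat_colsum {d : ℕ} (hreg : IsReg Gg d) (b : Wt) :
    ∑ a, adjMat Gg a b = (d : ℝ) := by
  rw [show ∑ a, adjMat Gg a b = ∑ a, adjMat Gg b a from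
    Finset.sum_congr rfl fun a _ => adjMat_symm_entry Gg a b]
  exact hreg b

lemma reg_quad_le {d : ℕ} (hreg : IsReg Gg d) (v : Wt → ℝ) :
    v ⬝ᵥ adjMat Gg *ᵥ v ≤ (d:ℝ) * (v ⬝ᵥ v) := by
  set A := adjMat Gg with hA
  have hA0 := adjMat_nonneg Gg
  have hquad : v ⬝ᵥ A *ᵥ v = ∑ a, ∑ b, v a * (A a b * v b) := by
    rw [dotProduct]
    refine Finset.sum_congr rfl fun a _ => ?_
    rw [Matrix.mulVec, dotProduct, Finset.mul_sum]
  have hbound : ∀ a b, v a * (A a b * v b) ≤ A a b * ((v a)^2 + (v b)^2) / 2 := by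
    intro a b
    nlinarith [mul_nonneg (hA0 a b) (sq_nonneg (v a - v b))]
  have h1 : ∑ a, ∑ b, A a b * (v a)^2 = (d:ℝ) * ∑ a, (v a)^2 := by
    rw [Finset.mul_sum]
    refine Finset.sum_congr rfl fun a _ => ?_
    rw [← Finset.sum_mul, hreg a]
  have h2 : ∑ a, ∑ b, A a b * (v b)^2 = (d:ℝ) * ∑ b, (v b)^2 := by
    rw [Finset.sum_comm, Finset.mul_sum]
    refine Finset.sum_congr rfl fun b _ => ?_
    rw [← Finset.sum_mul, adjMat_colsum Gg hreg b]
  have hvv : v ⬝ᵥ v = ∑ a, (v a)^2 := by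
    rw [dotProduct]; exact Finset.sum_congr rfl fun a _ => (sq (v a)).symm
  have hsum : ∑ a, ∑ b, v a * (A a b * v b) * 2
      ≤ ∑ a, ∑ b, (A a b * (v a)^2 + A a b * (v b)^2) := by
    refine Finset.sum_le_sum fun a _ => Finset.sum_le_sum fun b _ => ?_
    nlinarith [mul_nonneg (hA0 a b) (sq_nonneg (v a - v b))]
  have l1 : ∑ a, ∑ b, v a * (A a b * v b) * 2
      = (∑ a, ∑ b, v a * (A a b * v b)) * 2 := by
    rw [Finset.sum_mul]
    exact Finset.sum_congr rfl fun a _ => (Finset.sum_mul _ _ _).symm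
  have r1 : ∑ a, ∑ b, (A a b * (v a)^2 + A a b * (v b)^2)
      = (d:ℝ) * (∑ a, (v a)^2) + (d:ℝ) * (∑ b, (v b)^2) := by
    calc ∑ a, ∑ b, (A a b * (v a)^2 + A a b * (v b)^2)
        = ∑ a, ((∑ b, A a b * (v a)^2) + ∑ b, A a b * (v b)^2) :=
          Finset.sum_congr rfl fun a _ => Finset.sum_add_distrib
      _ = (∑ a, ∑ b, A a b * (v a)^2) + ∑ a, ∑ b, A a b * (v b)^2 :=
          Finset.sum_add_distrib
      _ = _ := by rw [h1, h2]
  rw [hquad, hvv]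
  rw [l1, r1] at hsum
  linarith
  
lemma ones_eig {d : ℕ} (hreg : IsReg Gg d) [Nonempty Wt] :
    (d:ℝ) ∈ eigs (adjMat Gg) := by
  refine ⟨fun _ => 1, ?_, ?_⟩
  · intro h
    have := congrFun h (Classical.arbitrary Wt)
    norm_num at this
  · funext i
    simp only [Matrix.mulVec, dotProduct, mul_one, Pi.smul_apply, smul_eq_mul]
    rw [hreg i]

lemma spread_of_empty (h : IsEmpty Wt) : spread Gg = 0 := by
  have he : {μ | IsEigen Gg μ} = (∅ : Set ℝ) := by
    ext μ
    simp only [Set.mem_setOf_eq, Set.mem_empty_iff_false, iff_false]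
    rintro ⟨v, hv, -⟩
    exact hv (funext fun i => h.elim i)
  unfold spread lamMax lamMin
  rw [he, Real.sSup_empty, Real.sInf_empty, sub_zero]

lemma blk_lower {d : ℕ} (hreg : IsReg Gg d) (x : Wt → ℝ) :
    ((d:ℝ) - spread Gg) * (x ⬝ᵥ x) ≤ x ⬝ᵥ adjMat Gg *ᵥ x := by
  by_cases hne : Nonempty Wt
  · have hd : (d:ℝ) ≤ lamMax Gg := le_csSup (by rw [eigsIsEigen]; exact eigs_bddAbove _)
      (by rw [eigsIsEigen]; exact ones_eig Gg hreg)
    have hlm : (d:ℝ) - spread Gg ≤ lamMin Gg := by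
      unfold spread at *; linarith
    calc ((d:ℝ) - spread Gg) * (x ⬝ᵥ x) ≤ lamMin Gg * (x ⬝ᵥ x) :=
          mul_le_mul_of_nonneg_right hlm (dot_self_nonneg x)
      _ = sInf (eigs (adjMat Gg)) * (x ⬝ᵥ x) := by rw [lamMin, eigsIsEigen]
      _ ≤ x ⬝ᵥ adjMat Gg *ᵥ x := sInf_le_quadform (adjMat_herm Gg) x
  · have h : IsEmpty Wt := not_nonempty_iff.mp hne
    have hx : x ⬝ᵥ x = 0 := by rw [dotProduct]; exact Finset.sum_of_isEmpty _
    have hq : x ⬝ᵥ adjMat Gg *ᵥ x = 0 := by rw [dotProduct]; exact Finset.sum_of_isEmpty _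
    rw [hx, hq, mul_zero]


lemma const_dot_quad {d : ℕ} (hreg : IsReg Gg d) (κ : ℝ) (x : Wt → ℝ) :
    (fun _ => κ) ⬝ᵥ adjMat Gg *ᵥ x = κ * d * ∑ a, x a := by
  rw [dotProduct]
  have h1 : ∀ a, (adjMat Gg *ᵥ x) a = ∑ b, adjMat Gg a b * x b := fun a => rfl
  calc ∑ a, κ * (adjMat Gg *ᵥ x) a = κ * ∑ a, ∑ b, adjMat Gg a b * x b := by
        rw [Finset.mul_sum]
        exact Finset.sum_congr rfl fun a _ => by rw [h1 a]
    _ = κ * ∑ b, (∑ a, adjMat Gg a b) * x b := by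
        rw [Finset.sum_comm]
        congr 1
        exact Finset.sum_congr rfl fun b _ => (Finset.sum_mul _ _ _).symm
    _ = κ * ∑ b, (d:ℝ) * x b := by
        congr 1
        exact Finset.sum_congr rfl fun b _ => by rw [adjMat_colsum Gg hreg b]
    _ = κ * d * ∑ a, x a := by rw [← Finset.mul_sum]; ring

lemma quad_dot_const {d : ℕ} (hreg : IsReg Gg d) (κ : ℝ) (x : Wt → ℝ) :
    x ⬝ᵥ adjMat Gg *ᵥ (fun _ => κ) = κ * d * ∑ a, x a := by
  rw [dotProduct]
  have h1 : ∀ a, (adjMat Gg *ᵥ (fun _ => κ)) a = (d:ℝ) * κ := by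
    intro a
    show ∑ b, adjMat Gg a b * κ = (d:ℝ) * κ
    rw [← Finset.sum_mul, hreg a]
  calc ∑ a, x a * (adjMat Gg *ᵥ (fun _ => κ)) a = ∑ a, x a * ((d:ℝ) * κ) := by
        exact Finset.sum_congr rfl fun a _ => by rw [h1 a]
    _ = κ * d * ∑ a, x a := by rw [← Finset.sum_mul]; ring

end graphs


section joinsec
variable {p : ℕ} {V : Fin p → Type*} [∀ i, Fintype (V i)]
  (H : SimpleGraph (Fin p)) (G : ∀ i, SimpleGraph (V i))

lemma sum_sigma_split (f : (Σ i, V i) → ℝ) : ∑ x, f x = ∑ i, ∑ a, f ⟨i,a⟩ := by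
  rw [← Finset.univ_sigma_univ, Finset.sum_sigma]

lemma A_same (i : Fin p) (a b : V i) :
    adjMat (genJoin H G fun _ => Set.univ) ⟨i,a⟩ ⟨i,b⟩ = adjMat (G i) a b := by
  have hiff : (genJoin H G fun _ => Set.univ).Adj ⟨i,a⟩ ⟨i,b⟩ ↔ (G i).Adj a b := by
    constructor
    · rintro (⟨i', a', b', h1, h2, hadj⟩ | ⟨hne, -⟩)
      · obtain ⟨rfl, ha⟩ := Sigma.mk.inj_iff.mp h1
        obtain ⟨-, hb⟩ := Sigma.mk.inj_iff.mp h2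
        rw [heq_iff_eq.mp ha, heq_iff_eq.mp hb]
        exact hadj
      · exact absurd rfl hne
    · intro h; exact Or.inl ⟨i, a, b, rfl, rfl, h⟩
  unfold adjMat
  exact if_congr hiff rfl rfl

lemma A_ne {i j : Fin p} (hne : i ≠ j) (a : V i) (b : V j) :
    adjMat (genJoin H G fun _ => Set.univ) ⟨i,a⟩ ⟨j,b⟩ = adjMat H i j := by
  have hiff : (genJoin H G fun _ => Set.univ).Adj ⟨i,a⟩ ⟨j,b⟩ ↔ H.Adj i j := by
    constructor
    · rintro (⟨i', a', b', h1, h2, hadj⟩ | ⟨-, hH, -, -⟩)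
      · obtain ⟨rfl, -⟩ := Sigma.mk.inj_iff.mp h1
        obtain ⟨rfl, -⟩ := Sigma.mk.inj_iff.mp h2
        exact absurd rfl hne
      · exact hH
    · intro h; exact Or.inr ⟨hne, h, Set.mem_univ _, Set.mem_univ _⟩
  unfold adjMat
  exact if_congr hiff rfl rfl

lemma bilin_split (u v : (Σ i, V i) → ℝ) :
    u ⬝ᵥ (adjMat (genJoin H G fun _ => Set.univ)) *ᵥ v
      = (∑ i, (fun a => u ⟨i,a⟩) ⬝ᵥ adjMat (G i) *ᵥ (fun b => v ⟨i,b⟩))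
        + ∑ i, ∑ j, adjMat H i j * (∑ a, u ⟨i,a⟩) * (∑ b, v ⟨j,b⟩) := by
  classical
  set A := adjMat (genJoin H G fun _ => Set.univ) with hA
  have expand : u ⬝ᵥ A *ᵥ v = ∑ x, ∑ y, u x * (A x y * v y) := by
    rw [dotProduct]
    refine Finset.sum_congr rfl fun x _ => ?_
    rw [Matrix.mulVec, dotProduct, Finset.mul_sum]
  have step1 : u ⬝ᵥ A *ᵥ v
      = ∑ i, ∑ j, ∑ a, ∑ b, u ⟨i,a⟩ * (A ⟨i,a⟩ ⟨j,b⟩ * v ⟨j,b⟩) := by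
    rw [expand, sum_sigma_split (f := fun x => ∑ y, u x * (A x y * v y))]
    refine Finset.sum_congr rfl fun i _ => ?_
    rw [show (∑ a, ∑ y, u ⟨i,a⟩ * (A ⟨i,a⟩ y * v y))
        = ∑ a, ∑ j, ∑ b, u ⟨i,a⟩ * (A ⟨i,a⟩ ⟨j,b⟩ * v ⟨j,b⟩) from
      Finset.sum_congr rfl fun a _ =>
        sum_sigma_split (f := fun y => u ⟨i,a⟩ * (A ⟨i,a⟩ y * v y))]
    exact Finset.sum_comm
  have key : ∀ i j : Fin p,
      (∑ a, ∑ b, u ⟨i,a⟩ * (A ⟨i,a⟩ ⟨j,b⟩ * v ⟨j,b⟩))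
        = (if i = j then (fun a => u ⟨j,a⟩) ⬝ᵥ adjMat (G j) *ᵥ (fun b => v ⟨j,b⟩) else 0)
          + adjMat H i j * (∑ a, u ⟨i,a⟩) * (∑ b, v ⟨j,b⟩) := by
    intro i j
    by_cases h : i = j
    · subst h
      rw [if_pos rfl]
      have hH0 : adjMat H i i = 0 := by
        unfold adjMat; rw [if_neg (H.irrefl)]
      rw [hH0, zero_mul, zero_mul, add_zero]
      rw [dotProduct]
      refine Finset.sum_congr rfl fun a _ => ?_
      rw [Matrix.mulVec, dotProduct, Finset.mul_sum]
      refine Finset.sum_congr rfl fun b _ => ?_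
      rw [hA, A_same]
    · rw [if_neg h]
      rw [zero_add]
      have : ∀ a b, u ⟨i,a⟩ * (A ⟨i,a⟩ ⟨j,b⟩ * v ⟨j,b⟩)
          = adjMat H i j * (u ⟨i,a⟩ * v ⟨j,b⟩) := by
        intro a b; rw [hA, A_ne H G h]; ring
      calc (∑ a, ∑ b, u ⟨i,a⟩ * (A ⟨i,a⟩ ⟨j,b⟩ * v ⟨j,b⟩))
          = ∑ a, ∑ b, adjMat H i j * (u ⟨i,a⟩ * v ⟨j,b⟩) :=
            Finset.sum_congr rfl fun a _ => Finset.sum_congr rfl fun b _ => this a b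
        _ = adjMat H i j * ∑ a, ∑ b, u ⟨i,a⟩ * v ⟨j,b⟩ := by
            rw [Finset.mul_sum]
            exact Finset.sum_congr rfl fun a _ => (Finset.mul_sum _ _ _).symm
        _ = adjMat H i j * ((∑ a, u ⟨i,a⟩) * (∑ b, v ⟨j,b⟩)) := by
            rw [Finset.sum_mul_sum]
        _ = adjMat H i j * (∑ a, u ⟨i,a⟩) * (∑ b, v ⟨j,b⟩) := by ring
  rw [step1]
  have : ∑ i, ∑ j, ∑ a, ∑ b, u ⟨i,a⟩ * (A ⟨i,a⟩ ⟨j,b⟩ * v ⟨j,b⟩)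
      = ∑ i, ∑ j, ((if i = j then (fun a => u ⟨j,a⟩) ⬝ᵥ adjMat (G j) *ᵥ (fun b => v ⟨j,b⟩) else 0)
          + adjMat H i j * (∑ a, u ⟨i,a⟩) * (∑ b, v ⟨j,b⟩)) :=
    Finset.sum_congr rfl fun i _ => Finset.sum_congr rfl fun j _ => key i j
  rw [this]
  have split : ∀ i : Fin p,
      (∑ j, ((if i = j then (fun a => u ⟨j,a⟩) ⬝ᵥ adjMat (G j) *ᵥ (fun b => v ⟨j,b⟩) else 0)
          + adjMat H i j * (∑ a, u ⟨i,a⟩) * (∑ b, v ⟨j,b⟩)))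
        = ((fun a => u ⟨i,a⟩) ⬝ᵥ adjMat (G i) *ᵥ (fun b => v ⟨i,b⟩))
          + ∑ j, adjMat H i j * (∑ a, u ⟨i,a⟩) * (∑ b, v ⟨j,b⟩) := by
    intro i
    rw [Finset.sum_add_distrib]
    congr 1
    rw [Finset.sum_ite_eq]
    simp
  calc ∑ i, ∑ j, ((if i = j then (fun a => u ⟨j,a⟩) ⬝ᵥ adjMat (G j) *ᵥ (fun b => v ⟨j,b⟩) else 0)
          + adjMat H i j * (∑ a, u ⟨i,a⟩) * (∑ b, v ⟨j,b⟩))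
      = ∑ i, (((fun a => u ⟨i,a⟩) ⬝ᵥ adjMat (G i) *ᵥ (fun b => v ⟨i,b⟩))
          + ∑ j, adjMat H i j * (∑ a, u ⟨i,a⟩) * (∑ b, v ⟨j,b⟩)) :=
        Finset.sum_congr rfl fun i _ => split i
    _ = _ := Finset.sum_add_distrib

lemma dot_split (u v : (Σ i, V i) → ℝ) :
    u ⬝ᵥ v = ∑ i, (fun a => u ⟨i,a⟩) ⬝ᵥ (fun a => v ⟨i,a⟩) := by
  rw [dotProduct, sum_sigma_split (f := fun x => u x * v x)]
  rfl

end joinsec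

/-- upper bound
`s(G) ≤ max_i d_i + λ_1(H) λ_1(P) - min { min_i (d_i - s(G_i)), λ_p(M) }` for the `H`-join. -/
theorem stmt16 {p : ℕ} (hp : 0 < p) {V : Fin p → Type*} [∀ i, Fintype (V i)]
    (H : SimpleGraph (Fin p)) (G : ∀ i, SimpleGraph (V i)) (d n : Fin p → ℕ)
    (hreg : ∀ i, IsReg (G i) (d i)) (hcard : ∀ i, Fintype.card (V i) = n i) :
    spread (genJoin H G (fun _ => Set.univ)) ≤
      (⨆ i, (d i : ℝ)) +
        lamMax H *
          matMax (Matrix.of fun i j : Fin p =>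
            if i = j then 0 else Real.sqrt ((n i : ℝ) * (n j : ℝ))) -
        min (⨅ i, ((d i : ℝ) - spread (G i))) (matMin (Mjoin H n d)) := by
  classical
  haveI hpne : Nonempty (Fin p) := ⟨⟨0, hp⟩⟩
  set A := adjMat (genJoin H G (fun _ => Set.univ)) with hAdef
  set Pm : Matrix (Fin p) (Fin p) ℝ :=
    Matrix.of (fun i j : Fin p => if i = j then 0 else Real.sqrt ((n i : ℝ) * (n j : ℝ)))
    with hPmdef
  set Mm : Matrix (Fin p) (Fin p) ℝ := Mjoin H n d with hMmdef
  have hPherm : Pm.IsHermitian := by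
    ext i j
    rw [Matrix.conjTranspose_apply, star_trivial, hPmdef]
    simp only [Matrix.of_apply]
    by_cases h : i = j
    · subst h; rfl
    · rw [if_neg h, if_neg (fun hh => h hh.symm), mul_comm ((n j : ℝ)) ((n i : ℝ))]
  have hP0 : ∀ i j, 0 ≤ Pm i j := by
    intro i j
    rw [hPmdef]
    simp only [Matrix.of_apply]
    split_ifs
    · exact le_rfl
    · exact Real.sqrt_nonneg _
  have hHherm := adjMat_herm H
  have hH0 := adjMat_nonneg H
  have hα : 0 ≤ sSup (eigs (adjMat H)) := sSup_eigs_nonneg hHherm hH0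
  have hβ : 0 ≤ sSup (eigs Pm) := sSup_eigs_nonneg hPherm hP0
  have hsupd0 : (0:ℝ) ≤ ⨆ i, (d i : ℝ) :=
    le_trans (by positivity) (le_ciSup (f := fun i => (d i:ℝ)) (Finite.bddAbove_range _) (⟨0,hp⟩ : Fin p))
  have hspreadGJ : spread (genJoin H G (fun _ => Set.univ)) = sSup (eigs A) - sInf (eigs A) :=
    rfl
  have hlamH : lamMax H = sSup (eigs (adjMat H)) := rfl
  have hmatMaxP : matMax Pm = sSup (eigs Pm) := rfl
  have hmatMinM : matMin Mm = sInf (eigs Mm) := rfl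
  rw [hspreadGJ, hlamH, hmatMaxP, hmatMinM]
  by_cases hW : Nonempty ((i : Fin p) × V i)
  · -- main case
    haveI := hW
    have hAherm : A.IsHermitian := adjMat_herm _
    -- UPPER BOUND
    have upper : sSup (eigs A) ≤ (⨆ i, (d i : ℝ)) + sSup (eigs (adjMat H)) * sSup (eigs Pm) := by
      refine Real.sSup_le ?_ (add_nonneg hsupd0 (mul_nonneg hα hβ))
      rintro μ ⟨v, hv, hMv⟩
      have hquad : v ⬝ᵥ A *ᵥ v = μ * (v ⬝ᵥ v) := by
        rw [hMv]
        simp only [dotProduct, Pi.smul_apply, smul_eq_mul, Finset.mul_sum]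
        exact Finset.sum_congr rfl fun i _ => by ring
      have hsplit := bilin_split H G v v
      have hblock : (∑ i, (fun a => v ⟨i,a⟩) ⬝ᵥ adjMat (G i) *ᵥ (fun b => v ⟨i,b⟩))
          ≤ (⨆ i, (d i:ℝ)) * (v ⬝ᵥ v) := by
        rw [dot_split (u := v) (v := v), Finset.mul_sum]
        refine Finset.sum_le_sum fun i _ => ?_
        have h1 := reg_quad_le (G i) (hreg i) (fun a => v ⟨i,a⟩)
        have h2 : (d i : ℝ) ≤ ⨆ k, (d k:ℝ) := le_ciSup (f := fun k => (d k:ℝ)) (Finite.bddAbove_range _) i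
        have h3 : (0:ℝ) ≤ (fun a => v ⟨i,a⟩) ⬝ᵥ (fun a => v ⟨i,a⟩) := dot_self_nonneg _
        calc (fun a => v ⟨i,a⟩) ⬝ᵥ adjMat (G i) *ᵥ (fun b => v ⟨i,b⟩)
            ≤ (d i:ℝ) * ((fun a => v ⟨i,a⟩) ⬝ᵥ (fun a => v ⟨i,a⟩)) := h1
          _ ≤ (⨆ k, (d k:ℝ)) * ((fun a => v ⟨i,a⟩) ⬝ᵥ (fun a => v ⟨i,a⟩)) :=
              mul_le_mul_of_nonneg_right h2 h3
      set s : Fin p → ℝ := fun i => ∑ a, v ⟨i,a⟩ with hs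
      set t : Fin p → ℝ := fun i => if (n i : ℝ) = 0 then 0 else s i / Real.sqrt (n i) with ht
      have hempty : ∀ i, (n i:ℝ) = 0 → s i = 0 := by
        intro i hni
        haveI : IsEmpty (V i) := Fintype.card_eq_zero_iff.mp (by
          rw [hcard i]; exact_mod_cast hni)
        rw [hs]
        exact Finset.sum_of_isEmpty _
      have hst : ∀ i, Real.sqrt (n i) * t i = s i := by
        intro i
        simp only [ht]
        by_cases hni : (n i:ℝ) = 0
        · rw [if_pos hni, mul_zero, hempty i hni]
        · rw [if_neg hni]
          have hpos : (0:ℝ) < (n i:ℝ) := lt_of_le_of_ne (Nat.cast_nonneg _) (Ne.symm hni)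
          have : Real.sqrt (n i) ≠ 0 := by positivity
          field_simp
      have htq : ∀ i, (t i)^2 ≤ (fun a => v ⟨i,a⟩) ⬝ᵥ (fun a => v ⟨i,a⟩) := by
        intro i
        by_cases hni : (n i:ℝ) = 0
        · simp only [ht, if_pos hni]
          simpa using dot_self_nonneg (fun a => v ⟨i,a⟩)
        · have hpos : (0:ℝ) < (n i:ℝ) := lt_of_le_of_ne (Nat.cast_nonneg _) (Ne.symm hni)
          have hcs : (s i)^2 ≤ (n i:ℝ) * ((fun a => v ⟨i,a⟩) ⬝ᵥ (fun a => v ⟨i,a⟩)) := by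
            have := Finset.sum_mul_sq_le_sq_mul_sq Finset.univ (fun _ : V i => (1:ℝ))
              (fun a => v ⟨i,a⟩)
            have e1 : (∑ a : V i, (1:ℝ) * v ⟨i,a⟩) = s i := by
              rw [hs]; exact Finset.sum_congr rfl fun a _ => one_mul _
            have e2 : (∑ _a : V i, (1:ℝ)^2) = (n i:ℝ) := by
              simp [← hcard i]
            have e3 : (∑ a : V i, (v ⟨i,a⟩)^2)
                = (fun a => v ⟨i,a⟩) ⬝ᵥ (fun a => v ⟨i,a⟩) := by
              rw [dotProduct]
              exact Finset.sum_congr rfl fun a _ => sq (v ⟨i,a⟩)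
            rw [e1, e2, e3] at this
            exact this
          have ht2 : (t i)^2 = (s i)^2 / (n i:ℝ) := by
            simp only [ht]
            rw [if_neg hni, div_pow, Real.sq_sqrt (Nat.cast_nonneg _)]
          rw [ht2, div_le_iff₀ hpos]
          calc (s i)^2 ≤ (n i:ℝ) * ((fun a => v ⟨i,a⟩) ⬝ᵥ (fun a => v ⟨i,a⟩)) := hcs
            _ = ((fun a => v ⟨i,a⟩) ⬝ᵥ (fun a => v ⟨i,a⟩)) * (n i:ℝ) := mul_comm _ _
      have hcoup : ∑ i, ∑ j, adjMat H i j * s i * s j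
          ≤ sSup (eigs (adjMat H)) * sSup (eigs Pm) * (v ⬝ᵥ v) := by
        have heq : ∀ i j, adjMat H i j * s i * s j = adjMat H i j * Pm i j * t i * t j := by
          intro i j
          by_cases hij : i = j
          · subst hij
            rw [show adjMat H i i = 0 from by unfold adjMat; rw [if_neg (H.irrefl)]]
            ring
          · rw [hPmdef]
            simp only [Matrix.of_apply]
            rw [if_neg hij, Real.sqrt_mul (Nat.cast_nonneg _), ← hst i, ← hst j]
            ring
        rw [show (∑ i, ∑ j, adjMat H i j * s i * s j)
            = ∑ i, ∑ j, adjMat H i j * Pm i j * t i * t j from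
          Finset.sum_congr rfl fun i _ => Finset.sum_congr rfl fun j _ => heq i j]
        calc ∑ i, ∑ j, adjMat H i j * Pm i j * t i * t j
            ≤ sSup (eigs (adjMat H)) * sSup (eigs Pm) * ∑ i, (t i)^2 :=
              hadamard_bound hHherm hPherm hH0 hP0 t
          _ ≤ sSup (eigs (adjMat H)) * sSup (eigs Pm) * (v ⬝ᵥ v) := by
              refine mul_le_mul_of_nonneg_left ?_ (mul_nonneg hα hβ)
              rw [dot_split (u := v) (v := v)]
              exact Finset.sum_le_sum fun i _ => htq i
      have hvv := dot_self_pos hv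
      have hfinal : μ * (v ⬝ᵥ v)
          ≤ ((⨆ i, (d i:ℝ)) + sSup (eigs (adjMat H)) * sSup (eigs Pm)) * (v ⬝ᵥ v) := by
        rw [← hquad, hsplit]
        have := add_le_add hblock hcoup
        calc (∑ i, (fun a => v ⟨i,a⟩) ⬝ᵥ adjMat (G i) *ᵥ (fun b => v ⟨i,b⟩))
              + ∑ i, ∑ j, adjMat H i j * (∑ a, v ⟨i,a⟩) * (∑ b, v ⟨j,b⟩)
            ≤ (⨆ i, (d i:ℝ)) * (v ⬝ᵥ v)
              + sSup (eigs (adjMat H)) * sSup (eigs Pm) * (v ⬝ᵥ v) := this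
          _ = ((⨆ i, (d i:ℝ)) + sSup (eigs (adjMat H)) * sSup (eigs Pm)) * (v ⬝ᵥ v) := by
              ring
      nlinarith
    -- LOWER BOUND
    have lower : min (⨅ i, ((d i:ℝ) - spread (G i))) (sInf (eigs Mm)) ≤ sInf (eigs A) := by
      set m := min (⨅ i, ((d i:ℝ) - spread (G i))) (sInf (eigs Mm)) with hm
      refine le_csInf (eigs_nonempty hAherm) ?_
      rintro μ ⟨v, hv, hMv⟩
      have hquad : v ⬝ᵥ A *ᵥ v = μ * (v ⬝ᵥ v) := by
        rw [hMv]
        simp only [dotProduct, Pi.smul_apply, smul_eq_mul, Finset.mul_sum]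
        exact Finset.sum_congr rfl fun i _ => by ring
      set s : Fin p → ℝ := fun i => ∑ a, v ⟨i,a⟩ with hs
      set c : Fin p → ℝ := fun i => if (n i : ℝ) = 0 then 0 else s i / (n i) with hc
      set w : ((i : Fin p) × V i) → ℝ := fun x => c x.1 with hw
      set z : ((i : Fin p) × V i) → ℝ := v - w with hz
      have hzx : ∀ (x : (i : Fin p) × V i), z x = v x - c x.1 := fun x => rfl
      have hwsum : ∀ i, ∑ a : V i, w ⟨i,a⟩ = (n i:ℝ) * c i := by
        intro i
        have : ∀ a : V i, w ⟨i,a⟩ = c i := fun a => rfl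
        rw [Finset.sum_congr rfl fun a _ => this a, Finset.sum_const, Finset.card_univ,
          hcard i, nsmul_eq_mul]
      have hzsum : ∀ i, ∑ a : V i, z ⟨i,a⟩ = 0 := by
        intro i
        have : ∑ a : V i, z ⟨i,a⟩ = s i - (n i:ℝ) * c i := by
          rw [hs]
          simp only [hzx]
          rw [Finset.sum_sub_distrib, ← hwsum i]
        rw [this, hc]
        by_cases hni : (n i:ℝ) = 0
        · simp only [if_pos hni]
          have hsi : s i = 0 := by
            haveI : IsEmpty (V i) := Fintype.card_eq_zero_iff.mp (by
              rw [hcard i]; exact_mod_cast hni)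
            rw [hs]; exact Finset.sum_of_isEmpty _
          rw [hsi]; ring
        · simp only [if_neg hni]
          field_simp
          ring
      have hcross1 : w ⬝ᵥ A *ᵥ z = 0 := by
        rw [bilin_split H G w z]
        have h1 : ∀ i, (fun a => w ⟨i,a⟩) ⬝ᵥ adjMat (G i) *ᵥ (fun b => z ⟨i,b⟩) = 0 := by
          intro i
          have : (fun a : V i => w ⟨i,a⟩) = fun _ => c i := rfl
          rw [this, const_dot_quad (G i) (hreg i) (c i) (fun b => z ⟨i,b⟩), hzsum i, mul_zero]
        have h2 : ∀ i j, adjMat H i j * (∑ a, w ⟨i,a⟩) * (∑ b, z ⟨j,b⟩) = 0 := by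
          intro i j; rw [hzsum j, mul_zero]
        rw [Finset.sum_congr rfl fun i _ => h1 i,
          Finset.sum_congr rfl fun i _ => Finset.sum_congr rfl fun j _ => h2 i j]
        simp
      have hcross2 : z ⬝ᵥ A *ᵥ w = 0 := by
        rw [bilin_split H G z w]
        have h1 : ∀ i, (fun a => z ⟨i,a⟩) ⬝ᵥ adjMat (G i) *ᵥ (fun b => w ⟨i,b⟩) = 0 := by
          intro i
          have : (fun b : V i => w ⟨i,b⟩) = fun _ => c i := rfl
          rw [this, quad_dot_const (G i) (hreg i) (c i) (fun a => z ⟨i,a⟩), hzsum i, mul_zero]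
        have h2 : ∀ i j, adjMat H i j * (∑ a, z ⟨i,a⟩) * (∑ b, w ⟨j,b⟩) = 0 := by
          intro i j; rw [hzsum i, mul_zero, zero_mul]
        rw [Finset.sum_congr rfl fun i _ => h1 i,
          Finset.sum_congr rfl fun i _ => Finset.sum_congr rfl fun j _ => h2 i j]
        simp
      have hwz : w ⬝ᵥ z = 0 := by
        rw [dot_split w z]
        have h1 : ∀ i, (fun a => w ⟨i,a⟩) ⬝ᵥ (fun a => z ⟨i,a⟩) = 0 := by
          intro i
          rw [dotProduct]
          have : ∀ a : V i, w ⟨i,a⟩ * z ⟨i,a⟩ = c i * z ⟨i,a⟩ := fun a => rfl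
          rw [Finset.sum_congr rfl fun a _ => this a, ← Finset.mul_sum, hzsum i, mul_zero]
        rw [Finset.sum_congr rfl fun i _ => h1 i]
        simp
      have hzw : z ⬝ᵥ w = 0 := by rw [dotProduct_comm]; exact hwz
      have hveq : v = w + z := by
        funext x
        simp only [Pi.add_apply, hzx]
        ring
      have hquadsplit : v ⬝ᵥ A *ᵥ v = w ⬝ᵥ A *ᵥ w + z ⬝ᵥ A *ᵥ z := by
        conv_lhs => rw [hveq]
        rw [Matrix.mulVec_add, dotProduct_add, add_dotProduct, add_dotProduct,
          hcross1, hcross2]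
        ring
      have hnormsplit : v ⬝ᵥ v = w ⬝ᵥ w + z ⬝ᵥ z := by
        conv_lhs => rw [hveq]
        rw [dotProduct_add, add_dotProduct, add_dotProduct, hwz, hzw]
        ring
      have hmle : ∀ i, m ≤ (d i:ℝ) - spread (G i) := fun i =>
        le_trans (min_le_left _ _) (ciInf_le (f := fun k => ((d k:ℝ) - spread (G k))) (Finite.bddBelow_range _) i)
      have hzlow : m * (z ⬝ᵥ z) ≤ z ⬝ᵥ A *ᵥ z := by
        rw [bilin_split H G z z]
        have h2 : ∀ i j, adjMat H i j * (∑ a, z ⟨i,a⟩) * (∑ b, z ⟨j,b⟩) = 0 := by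
          intro i j; rw [hzsum i, mul_zero, zero_mul]
        rw [Finset.sum_congr rfl fun i _ => Finset.sum_congr rfl fun j _ => h2 i j]
        simp only [Finset.sum_const_zero, add_zero]
        rw [dot_split z z, Finset.mul_sum]
        refine Finset.sum_le_sum fun i _ => ?_
        calc m * ((fun a => z ⟨i,a⟩) ⬝ᵥ (fun a => z ⟨i,a⟩))
            ≤ ((d i:ℝ) - spread (G i)) * ((fun a => z ⟨i,a⟩) ⬝ᵥ (fun a => z ⟨i,a⟩)) :=
              mul_le_mul_of_nonneg_right (hmle i) (dot_self_nonneg _)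
          _ ≤ (fun a => z ⟨i,a⟩) ⬝ᵥ adjMat (G i) *ᵥ (fun a => z ⟨i,a⟩) :=
              blk_lower (G i) (hreg i) _
      have hwlow : m * (w ⬝ᵥ w) ≤ w ⬝ᵥ A *ᵥ w := by
        set y : Fin p → ℝ := fun i => Real.sqrt (n i) * c i with hy
        set Sm : Matrix (Fin p) (Fin p) ℝ :=
          Matrix.of (fun i j : Fin p =>
            (if i = j then (d i:ℝ) else 0)
              + adjMat H i j * Real.sqrt (n i) * Real.sqrt (n j)) with hSmdef
        have hSherm : Sm.IsHermitian := by
          ext i j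
          rw [Matrix.conjTranspose_apply, star_trivial, hSmdef]
          simp only [Matrix.of_apply]
          by_cases h : i = j
          · subst h; rfl
          · rw [if_neg (fun hh => h hh.symm), if_neg h, adjMat_symm_entry H j i]
            ring
        have hsqn : ∀ i, Real.sqrt (n i) * Real.sqrt (n i) = (n i:ℝ) :=
          fun i => Real.mul_self_sqrt (Nat.cast_nonneg _)
        have hyS : y ⬝ᵥ Sm *ᵥ y = w ⬝ᵥ A *ᵥ w := by
          rw [bilin_split H G w w]
          have hb : ∀ i, (fun a => w ⟨i,a⟩) ⬝ᵥ adjMat (G i) *ᵥ (fun b => w ⟨i,b⟩)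
              = (d i:ℝ) * ((n i:ℝ) * (c i)^2) := by
            intro i
            have e0 : (fun a : V i => w ⟨i,a⟩) = fun _ => c i := rfl
            rw [e0, quad_dot_const (G i) (hreg i) (c i) (fun _ => c i),
              Finset.sum_const, Finset.card_univ, hcard i, nsmul_eq_mul]
            ring
          have hcw : ∀ i, (∑ a, w ⟨i,a⟩) = (n i:ℝ) * c i := hwsum
          rw [Finset.sum_congr rfl fun i _ => hb i]
          have hcoupw : ∀ i j, adjMat H i j * (∑ a, w ⟨i,a⟩) * (∑ b, w ⟨j,b⟩)
              = adjMat H i j * ((n i:ℝ) * c i) * ((n j:ℝ) * c j) := by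
            intro i j; rw [hcw i, hcw j]
          rw [Finset.sum_congr rfl fun i _ =>
            Finset.sum_congr rfl fun j _ => hcoupw i j]
          have hexpand : y ⬝ᵥ Sm *ᵥ y = ∑ i, ∑ j, y i * (Sm i j * y j) := by
            rw [dotProduct]
            refine Finset.sum_congr rfl fun i _ => ?_
            rw [Matrix.mulVec, dotProduct, Finset.mul_sum]
          rw [hexpand]
          have hterm : ∀ i j, y i * (Sm i j * y j)
              = (if i = j then (d i:ℝ) * ((n i:ℝ) * (c i)^2) else 0)
                + adjMat H i j * ((n i:ℝ) * c i) * ((n j:ℝ) * c j) := by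
            intro i j
            rw [hSmdef]
            simp only [Matrix.of_apply]
            by_cases h : i = j
            · subst h
              rw [if_pos rfl, if_pos rfl]
              simp only [hy]
              obtain ⟨si, hsi1, hsi2⟩ : ∃ si, Real.sqrt ((n i:ℝ)) = si ∧ (n i:ℝ) = si * si :=
                ⟨_, rfl, (hsqn i).symm⟩
              rw [hsi1, hsi2]
              ring
            · rw [if_neg h, if_neg h]
              simp only [hy]
              obtain ⟨si, hsi1, hsi2⟩ : ∃ si, Real.sqrt ((n i:ℝ)) = si ∧ (n i:ℝ) = si * si :=
                ⟨_, rfl, (hsqn i).symm⟩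
              obtain ⟨sj, hsj1, hsj2⟩ : ∃ sj, Real.sqrt ((n j:ℝ)) = sj ∧ (n j:ℝ) = sj * sj :=
                ⟨_, rfl, (hsqn j).symm⟩
              rw [hsi1, hsj1, hsi2, hsj2]
              ring
          rw [Finset.sum_congr rfl fun i _ => Finset.sum_congr rfl fun j _ => hterm i j]
          have : ∀ i, (∑ j, ((if i = j then (d i:ℝ) * ((n i:ℝ) * (c i)^2) else 0)
                + adjMat H i j * ((n i:ℝ) * c i) * ((n j:ℝ) * c j)))
              = (d i:ℝ) * ((n i:ℝ) * (c i)^2)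
                + ∑ j, adjMat H i j * ((n i:ℝ) * c i) * ((n j:ℝ) * c j) := by
            intro i
            rw [Finset.sum_add_distrib, Finset.sum_ite_eq]
            simp
          rw [Finset.sum_congr rfl fun i _ => this i, Finset.sum_add_distrib]
        have hq2 : w ⬝ᵥ w = y ⬝ᵥ y := by
          rw [dot_split w w, show y ⬝ᵥ y = ∑ i, y i * y i from rfl]
          refine Finset.sum_congr rfl fun i _ => ?_
          have e1 : (fun a : V i => w ⟨i,a⟩) ⬝ᵥ (fun a : V i => w ⟨i,a⟩)
              = (n i:ℝ) * (c i * c i) := by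
            show (∑ a : V i, w ⟨i,a⟩ * w ⟨i,a⟩) = _
            have e2 : ∀ a : V i, w ⟨i,a⟩ * w ⟨i,a⟩ = c i * c i := fun a => rfl
            rw [Finset.sum_congr rfl fun a _ => e2 a, Finset.sum_const, Finset.card_univ,
              hcard i, nsmul_eq_mul]
          rw [e1]
          simp only [hy]
          obtain ⟨si, hsi1, hsi2⟩ : ∃ si, Real.sqrt ((n i:ℝ)) = si ∧ (n i:ℝ) = si * si :=
            ⟨_, rfl, (hsqn i).symm⟩
          rw [hsi1, hsi2]
          ring
        have hMj : ∀ (j i' : Fin p), Mjoin H n d j i'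
            = adjMat H j i' * (n i':ℝ) + (if j = i' then (d j:ℝ) else 0) := by
          intro j i'
          unfold Mjoin
          rw [Matrix.add_apply, Matrix.mul_diagonal, Matrix.diagonal_apply]
        have hsub : eigs Sm ⊆ eigs Mm := by
          rintro lam ⟨x, hx, hSx⟩
          set u : Fin p → ℝ := fun i => Real.sqrt (n i) * x i with hu
          have hSrow : ∀ i, (Sm *ᵥ x) i
              = (d i:ℝ) * x i
                + Real.sqrt (n i) * ∑ j, adjMat H i j * Real.sqrt (n j) * x j := by
            intro i
            show ∑ j, Sm i j * x j = _
            have hterm : ∀ j, Sm i j * x j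
                = (if i = j then (d i:ℝ) * x j else 0)
                  + Real.sqrt (n i) * (adjMat H i j * Real.sqrt (n j) * x j) := by
              intro j
              rw [hSmdef]
              simp only [Matrix.of_apply]
              by_cases h : i = j
              · subst h; rw [if_pos rfl, if_pos rfl]; ring
              · rw [if_neg h, if_neg h]; ring
            rw [Finset.sum_congr rfl fun j _ => hterm j, Finset.sum_add_distrib,
              Finset.sum_ite_eq, ← Finset.mul_sum]
            simp
          have hSxi : ∀ i, (d i:ℝ) * x i
              + Real.sqrt (n i) * ∑ j, adjMat H i j * Real.sqrt (n j) * x j = lam * x i := by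
            intro i
            rw [← hSrow i, hSx]
            simp
          by_cases hu0 : u = 0
          · obtain ⟨i, hxi⟩ := Function.ne_iff.mp hx
            have hsq0 : Real.sqrt (n i) = 0 := by
              have h := congrFun hu0 i
              simp only [hu, Pi.zero_apply] at h
              rcases mul_eq_zero.mp h with h' | h'
              · exact h'
              · exact absurd h' hxi
            have hnir : (n i : ℝ) = 0 := by
              have h1 := Real.sqrt_eq_zero'.mp hsq0
              exact le_antisymm h1 (Nat.cast_nonneg _)
            have hlam : lam = (d i:ℝ) := by
              have h1 := hSxi i
              rw [hsq0, zero_mul, add_zero] at h1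
              exact (mul_right_cancel₀ hxi h1).symm
            refine ⟨(Pi.single i 1 : Fin p → ℝ), ?_, ?_⟩
            · intro hcontra
              have := congrFun hcontra i
              simp at this
            · funext j
              have h1 : (Mm *ᵥ (Pi.single i 1 : Fin p → ℝ)) j = Mm j i := by
                simp [Matrix.mulVec_single]
              rw [h1, hMmdef, hMj j i, hnir, mul_zero, zero_add]
              rw [Pi.smul_apply, hlam]
              by_cases hji : j = i
              · subst hji
                rw [if_pos rfl]
                simp
              · rw [if_neg hji]
                simp [Pi.single_apply, hji]
          · have hMTu : Mmᵀ *ᵥ u = lam • u := by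
              funext i
              have hcol : (Mmᵀ *ᵥ u) i = ∑ j, Mm j i * u j := by
                rw [Matrix.mulVec, dotProduct]
                exact Finset.sum_congr rfl fun j _ => by rw [Matrix.transpose_apply]
              rw [hcol]
              have hentry : ∀ j, Mm j i
                  = adjMat H j i * (n i:ℝ) + (if j = i then (d j:ℝ) else 0) := by
                intro j
                rw [hMmdef, hMj j i]
              have hsum : ∑ j, Mm j i * u j
                  = (n i:ℝ) * (∑ j, adjMat H i j * u j) + (d i:ℝ) * u i := by
                rw [Finset.sum_congr rfl fun j _ => by rw [hentry j]]
                rw [show (∑ j, (adjMat H j i * (n i:ℝ) + if j = i then (d j:ℝ) else 0) * u j)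
                    = (∑ j, adjMat H j i * (n i:ℝ) * u j)
                      + ∑ j, (if j = i then (d j:ℝ) else 0) * u j from by
                  rw [← Finset.sum_add_distrib]
                  exact Finset.sum_congr rfl fun j _ => by ring]
                congr 1
                · rw [Finset.mul_sum]
                  exact Finset.sum_congr rfl fun j _ => by
                    rw [adjMat_symm_entry H j i]; ring
                · rw [Finset.sum_eq_single i (fun j _ hj => by rw [if_neg hj, zero_mul])
                    (fun h => absurd (Finset.mem_univ i) h), if_pos rfl]
              rw [hsum]
              have hgoal : (lam • u) i = lam * (Real.sqrt (n i) * x i) := by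
                simp [hu]
              rw [hgoal]
              have h1 := hSxi i
              have h2 : ∀ j, adjMat H i j * u j = adjMat H i j * Real.sqrt (n j) * x j := by
                intro j; simp only [hu]; ring
              rw [Finset.sum_congr rfl fun j _ => h2 j]
              simp only [hu]
              obtain ⟨si, hsi1, hsi2⟩ : ∃ si, Real.sqrt ((n i:ℝ)) = si ∧ (n i:ℝ) = si * si :=
                ⟨_, rfl, (hsqn i).symm⟩
              rw [hsi1] at h1
              rw [hsi1, hsi2]
              linear_combination si * h1
            have hdetT : (Mm - lam • 1)ᵀ.det = 0 := by
              apply (Matrix.exists_mulVec_eq_zero_iff).mp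
              refine ⟨u, hu0, ?_⟩
              rw [Matrix.transpose_sub, Matrix.transpose_smul, Matrix.transpose_one,
                Matrix.sub_mulVec, hMTu, Matrix.smul_mulVec, Matrix.one_mulVec,
                sub_self]
            have hdet : (Mm - lam • 1).det = 0 := by
              rw [← Matrix.det_transpose]; exact hdetT
            obtain ⟨w2, hw2, hw2e⟩ := (Matrix.exists_mulVec_eq_zero_iff).mpr hdet
            refine ⟨w2, hw2, ?_⟩
            rw [Matrix.sub_mulVec, Matrix.smul_mulVec, Matrix.one_mulVec,
              sub_eq_zero] at hw2e
            exact hw2e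
        have hmS : m ≤ sInf (eigs Sm) := by
          refine le_csInf (eigs_nonempty hSherm) ?_
          intro lam hlam
          exact le_trans (min_le_right _ _) (csInf_le (eigs_bddBelow Mm) (hsub hlam))
        calc m * (w ⬝ᵥ w) = m * (y ⬝ᵥ y) := by rw [hq2]
          _ ≤ sInf (eigs Sm) * (y ⬝ᵥ y) :=
              mul_le_mul_of_nonneg_right hmS (dot_self_nonneg y)
          _ ≤ y ⬝ᵥ Sm *ᵥ y := sInf_le_quadform hSherm y
          _ = w ⬝ᵥ A *ᵥ w := hyS
      have hvv := dot_self_pos hv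
      have : m * (v ⬝ᵥ v) ≤ μ * (v ⬝ᵥ v) := by
        rw [← hquad, hquadsplit, hnormsplit]
        have := add_le_add hwlow hzlow
        linarith
      nlinarith
    linarith
  · -- degenerate case: all blocks empty
    haveI hWem : IsEmpty ((i : Fin p) × V i) := not_nonempty_iff.mp hW
    have hVem : ∀ i, IsEmpty (V i) := fun i => ⟨fun a => hW ⟨⟨i, a⟩⟩⟩
    have hn0 : ∀ i, n i = 0 := fun i => by
      haveI := hVem i
      rw [← hcard i]
      exact Fintype.card_eq_zero
    have h0 : spread (genJoin H G (fun _ => Set.univ)) = 0 :=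
      spread_of_empty _ hWem
    rw [hspreadGJ] at h0
    have hPzero : Pm = 0 := by
      rw [hPmdef]
      ext i j
      simp only [Matrix.of_apply, Matrix.zero_apply]
      split_ifs with h
      · rfl
      · rw [hn0 i]
        norm_num
    have hmax0 : sSup (eigs Pm) = 0 := by
      rw [hPzero]
      have heig : eigs (0 : Matrix (Fin p) (Fin p) ℝ) = {0} := by
        ext μ
        constructor
        · rintro ⟨x, hx, hx2⟩
          rw [Matrix.zero_mulVec] at hx2
          obtain ⟨i, hi⟩ := Function.ne_iff.mp hx
          have h3 := congrFun hx2.symm i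
          simp only [Pi.smul_apply, smul_eq_mul, Pi.zero_apply] at h3
          rcases mul_eq_zero.mp h3 with h4 | h4
          · exact h4
          · exact absurd h4 hi
        · rintro hμ
          simp only [Set.mem_singleton_iff] at hμ
          subst hμ
          refine ⟨fun _ => 1, ?_, ?_⟩
          · intro hcontra
            have := congrFun hcontra ⟨0, hp⟩
            norm_num at this
          · rw [Matrix.zero_mulVec, zero_smul]
      rw [heig, csSup_singleton]
    have hsprGi : spread (G ⟨0, hp⟩) = 0 := spread_of_empty _ (hVem _)
    have h1 : (⨅ i, ((d i:ℝ) - spread (G i))) ≤ (d ⟨0,hp⟩ : ℝ) := by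
      calc (⨅ i, ((d i:ℝ) - spread (G i)))
          ≤ (d ⟨0,hp⟩:ℝ) - spread (G ⟨0,hp⟩) :=
            ciInf_le (f := fun i => ((d i:ℝ) - spread (G i))) (Finite.bddBelow_range _) _
        _ = (d ⟨0,hp⟩:ℝ) := by rw [hsprGi, sub_zero]
    have h2 : (d ⟨0,hp⟩:ℝ) ≤ ⨆ i, (d i:ℝ) :=
      le_ciSup (f := fun i => (d i:ℝ)) (Finite.bddAbove_range _) _
    have h3 := min_le_left (⨅ i, ((d i:ℝ) - spread (G i))) (sInf (eigs Mm))
    rw [hmax0, mul_zero]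
    linarith
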